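/- If the sobrification X^s of a T0 space X is first-countable, then X is an ω-Rudin space: every irreducible closed subset A of X is a minimal closed set meeting all members of some countable filtered family of nonempty compact saturated subsets of X. -/

import Mathlib

/-- A set is saturated if it is the intersection of all open sets containing it. -/
def IsSaturatedSet {X : Type*} [TopologicalSpace X] (A : Set X) : Prop :=
  A = ⋂₀ {U : Set X | IsOpen U ∧ A ⊆ U}

/-- The points of the sobrification: irreducible closed subsets of `X`. -/
def IrrC (X : Type*) [TopologicalSpace X] := {A : Set X // IsIrreducible A ∧ IsClosed A}

/-- The topology of the sobrification `X^s`. -/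
def sobTop (X : Type*) [TopologicalSpace X] : TopologicalSpace (IrrC X) :=
  TopologicalSpace.generateFrom
    {s : Set (IrrC X) | ∃ U : Set X, IsOpen U ∧ s = {F : IrrC X | (F.1 ∩ U).Nonempty}}

/-- If the sobrification of a T0 space `X` is first-countable, then `X` is an ω-Rudin
space: every irreducible closed `A` is a minimal closed set meeting all members of some
countable filtered family of nonempty compact saturated subsets of `X`. -/
theorem stmt16 {X : Type*} [TopologicalSpace X] [T0Space X]
    (h : @FirstCountableTopology (IrrC X) (sobTop X)) :
    ∀ A : Set X, IsIrreducible A → IsClosed A →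
      ∃ K : ℕ → Set X,
        (∀ n, (K n).Nonempty ∧ IsCompact (K n) ∧ IsSaturatedSet (K n)) ∧
        (∀ m n, ∃ k, K k ⊆ K m ∧ K k ⊆ K n) ∧
        (∀ n, (A ∩ K n).Nonempty) ∧
        (∀ B : Set X, B ⊆ A → IsClosed B → (∀ n, (B ∩ K n).Nonempty) → B = A) := by
  intro A hA hAc
  classical
  letI := sobTop X
  haveI : @FirstCountableTopology (IrrC X) (sobTop X) := h
  set g : Set (Set (IrrC X)) :=
    {s | ∃ U : Set X, IsOpen U ∧ s = {F : IrrC X | (F.1 ∩ U).Nonempty}} with hg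
  have hgen : (sobTop X) = TopologicalSpace.generateFrom g := rfl
  let ξ : IrrC X := ⟨A, hA, hAc⟩
  let η : X → IrrC X := fun p => ⟨closure {p}, isIrreducible_singleton.closure, isClosed_closure⟩
  -- basic opens are open
  have hdia : ∀ U : Set X, IsOpen U →
      IsOpen {F : IrrC X | (F.1 ∩ U).Nonempty} := fun U hU =>
    TopologicalSpace.isOpen_generateFrom_of_mem ⟨U, hU, rfl⟩
  -- antitone neighborhood basis at ξ
  obtain ⟨V, hV⟩ := (nhds ξ).exists_antitone_basis
  -- choose the sequence
  have hx : ∀ n : ℕ, ∃ p : X, p ∈ A ∧ η p ∈ V n := by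
    intro n
    have hVn : V n ∈ @nhds _ (TopologicalSpace.generateFrom g) ξ := hV.mem n
    rw [TopologicalSpace.nhds_generateFrom] at hVn
    have hdir : DirectedOn ((fun s => Filter.principal s) ⁻¹'o (· ≥ ·))
        {s | ξ ∈ s ∧ s ∈ g} := by
      rintro s ⟨hs1, U, hU, rfl⟩ t ⟨ht1, W, hW, rfl⟩
      refine ⟨{F : IrrC X | (F.1 ∩ (U ∩ W)).Nonempty}, ⟨?_, U ∩ W, hU.inter hW, rfl⟩, ?_, ?_⟩
      · exact hA.2 U W hU hW hs1 ht1
      · exact Filter.principal_mono.2 fun F hF => hF.mono (Set.inter_subset_inter_right _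
          Set.inter_subset_left)
      · exact Filter.principal_mono.2 fun F hF => hF.mono (Set.inter_subset_inter_right _
          Set.inter_subset_right)
    have hne : ({s | ξ ∈ s ∧ s ∈ g} : Set (Set (IrrC X))).Nonempty := by
      refine ⟨{F : IrrC X | (F.1 ∩ Set.univ).Nonempty}, ?_, Set.univ, isOpen_univ, rfl⟩
      simpa using hA.1
    rw [Filter.mem_biInf_of_directed hdir hne] at hVn
    obtain ⟨s, ⟨hξs, U, hU, rfl⟩, hsV⟩ := hVn
    obtain ⟨p, hpA, hpU⟩ := hξs
    refine ⟨p, hpA, hsV ?_⟩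
    exact ⟨p, subset_closure rfl, hpU⟩
  choose x hxA hxV using hx
  -- key property: for every open U meeting A, the sequence is eventually in U
  have hstar : ∀ U : Set X, IsOpen U → (A ∩ U).Nonempty → ∃ N, ∀ k ≥ N, x k ∈ U := by
    intro U hU hAU
    have hmem : {F : IrrC X | (F.1 ∩ U).Nonempty} ∈ nhds ξ :=
      (hdia U hU).mem_nhds hAU
    obtain ⟨N, -, hN⟩ := hV.toHasBasis.mem_iff.1 hmem
    refine ⟨N, fun k hk => ?_⟩
    have : η (x k) ∈ {F : IrrC X | (F.1 ∩ U).Nonempty} := hN (hV.antitone hk (hxV k))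
    obtain ⟨y, hy, hyU⟩ := this
    rcases (mem_closure_iff.1 hy) U hU hyU with ⟨z, hz1, hz2⟩
    rwa [Set.mem_singleton_iff.1 hz2] at hz1
  -- the compact saturated sets
  refine ⟨fun n => ⋂₀ {U : Set X | IsOpen U ∧ ∀ k ≥ n, x k ∈ U}, ?_, ?_, ?_, ?_⟩
  · intro n
    have hmemK : ∀ k ≥ n, x k ∈ ⋂₀ {U : Set X | IsOpen U ∧ ∀ j ≥ n, x j ∈ U} := by
      intro k hk
      exact fun U hU => hU.2 k hk
    refine ⟨⟨x n, hmemK n le_rfl⟩, ?_, ?_⟩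
    · -- compactness
      apply isCompact_of_finite_subcover
      intro ι U hUo hcov
      obtain ⟨i0, hi0⟩ := Set.mem_iUnion.1 (hcov (hmemK n le_rfl))
      obtain ⟨N, hNall⟩ := hstar (U i0) (hUo i0) ⟨x n, hxA n, hi0⟩
      have hpick : ∀ k, ∃ i : ι, k ≥ n → x k ∈ U i := by
        intro k
        by_cases hk : k ≥ n
        · obtain ⟨i, hi⟩ := Set.mem_iUnion.1 (hcov (hmemK k hk))
          exact ⟨i, fun _ => hi⟩
        · exact ⟨i0, fun hkn => absurd hkn hk⟩
      choose f hf using hpick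
      refine ⟨insert i0 ((Finset.range N).image f), ?_⟩
      have hWopen : IsOpen (⋃ i ∈ insert i0 ((Finset.range N).image f), U i) :=
        isOpen_biUnion fun i _ => hUo i
      intro y hy
      refine hy _ ⟨hWopen, fun k hk => ?_⟩
      by_cases hkN : k ≥ N
      · exact Set.mem_biUnion (Finset.mem_insert_self _ _) (hNall k hkN)
      · refine Set.mem_biUnion (Finset.mem_insert_of_mem ?_) (hf k hk)
        exact Finset.mem_image_of_mem f (Finset.mem_range.2 (lt_of_not_ge hkN))
    · -- saturation
      apply Set.Subset.antisymm
      · intro y hy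
        exact fun U hU => hU.2 hy
      · intro y hy U hU
        refine hy U ⟨hU.1, fun z hz => hz U hU⟩
  · -- filtered
    intro m n
    refine ⟨max m n, fun y hy U hU => ?_, fun y hy U hU => ?_⟩
    · exact hy U ⟨hU.1, fun k hk => hU.2 k (le_trans (le_max_left m n) hk)⟩
    · exact hy U ⟨hU.1, fun k hk => hU.2 k (le_trans (le_max_right m n) hk)⟩
  · -- meets A
    intro n
    exact ⟨x n, hxA n, fun U hU => hU.2 n le_rfl⟩
  · -- minimality
    intro B hBA hBc hBK
    have hBtail : ∀ n, ∃ k ≥ n, x k ∈ B := by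
      intro n
      by_contra hcon
      push_neg at hcon
      obtain ⟨y, hyB, hyK⟩ := hBK n
      exact (hyK Bᶜ ⟨hBc.isOpen_compl, fun k hk => hcon k hk⟩) hyB
    refine Set.Subset.antisymm hBA fun a ha => ?_
    by_contra hab
    obtain ⟨N, hN⟩ := hstar Bᶜ hBc.isOpen_compl ⟨a, ha, hab⟩
    obtain ⟨k, hk, hkB⟩ := hBtail N
    exact hN k hk hkB
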